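/- The metric g on S³×S³ defined by g(Z,Z') = ½(⟨Z,Z'⟩ + ⟨JZ,JZ'⟩) satisfies the explicit formula g(Z,Z') = (4/3)(⟨U,U'⟩ + ⟨V,V'⟩) − (2/3)(⟨p⁻¹U, q⁻¹V'⟩ + ⟨p⁻¹U', q⁻¹V⟩), where Z = (U,V), Z' = (U',V') are tangent vectors at (p,q) and ⟨·,·⟩ is the product of the round metrics (restrictions of the Euclidean inner product on ℝ⁴). -/

import Mathlib

noncomputable section

/-- The almost complex structure `J` of the nearly Kähler `S³ × S³` at the point `(p, q)`. -/
def NKJ (p q : Quaternion ℝ) (Z : Quaternion ℝ × Quaternion ℝ) :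
    Quaternion ℝ × Quaternion ℝ :=
  ((Real.sqrt 3)⁻¹ • ((2 : ℝ) • (p * q⁻¹ * Z.2) - Z.1),
   (Real.sqrt 3)⁻¹ • (-((2 : ℝ) • (q * p⁻¹ * Z.1)) + Z.2))

/-- The real part of a product of quaternions is invariant under cyclic permutation. -/
lemma re_mul_comm (a b : Quaternion ℝ) : (a * b).re = (b * a).re := by
  simp only [Quaternion.re_mul]; ring

/-- Moving a factor across the quaternionic inner product. -/
lemma inner_mul_left' (a x y : Quaternion ℝ) :
    (inner ℝ (a * x) y : ℝ) = (inner ℝ x (star a * y) : ℝ) := by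
  rw [Quaternion.inner_def, Quaternion.inner_def, star_mul, star_star,
    mul_assoc a, re_mul_comm, mul_assoc]

/-- Left multiplication by a unit quaternion is an isometry. -/
lemma inner_unit_mul {a : Quaternion ℝ} (ha : ‖a‖ = 1) (x y : Quaternion ℝ) :
    (inner ℝ (a * x) (a * y) : ℝ) = (inner ℝ x y : ℝ) := by
  rw [inner_mul_left', ← mul_assoc, Quaternion.star_mul_self,
    Quaternion.normSq_eq_norm_mul_self, ha]
  norm_num

/-- The inverse of a unit quaternion is its conjugate. -/
lemma inv_eq_star' {a : Quaternion ℝ} (ha : ‖a‖ = 1) : a⁻¹ = star a := by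
  refine inv_eq_of_mul_eq_one_right ?_
  rw [Quaternion.self_mul_star, Quaternion.normSq_eq_norm_mul_self, ha]
  norm_num

/-- the nearly Kähler metric `g(Z,Z') = ½(⟨Z,Z'⟩ + ⟨JZ,JZ'⟩)` is given by the
explicit formula `(4/3)(⟨U,U'⟩+⟨V,V'⟩) − (2/3)(⟨p⁻¹U,q⁻¹V'⟩+⟨p⁻¹U',q⁻¹V⟩)`. -/
theorem NK_metric_formula (p q : Quaternion ℝ) (hp : ‖p‖ = 1) (hq : ‖q‖ = 1)
    (U V U' V' : Quaternion ℝ)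
    (hU : (inner ℝ U p : ℝ) = 0) (hV : (inner ℝ V q : ℝ) = 0)
    (hU' : (inner ℝ U' p : ℝ) = 0) (hV' : (inner ℝ V' q : ℝ) = 0) :
    (1 / 2 : ℝ) * (((inner ℝ U U' : ℝ) + (inner ℝ V V' : ℝ))
        + ((inner ℝ (NKJ p q (U, V)).1 (NKJ p q (U', V')).1 : ℝ)
          + (inner ℝ (NKJ p q (U, V)).2 (NKJ p q (U', V')).2 : ℝ)))
      = (4 / 3 : ℝ) * ((inner ℝ U U' : ℝ) + (inner ℝ V V' : ℝ))
        - (2 / 3 : ℝ) * ((inner ℝ (p⁻¹ * U) (q⁻¹ * V') : ℝ)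
          + (inner ℝ (p⁻¹ * U') (q⁻¹ * V) : ℝ)) := by
  have hsq : ‖star q‖ = 1 := by rwa [norm_star]
  simp only [NKJ, inv_eq_star' hp, inv_eq_star' hq, mul_assoc]
  simp only [real_inner_smul_left, real_inner_smul_right, inner_sub_left, inner_sub_right,
    inner_add_left, inner_add_right, inner_neg_left, inner_neg_right]
  rw [inner_unit_mul hp, inner_unit_mul hq, inner_unit_mul hsq,
    inner_unit_mul (by rwa [norm_star] : ‖star p‖ = 1)]
  rw [real_inner_comm (p * (star q * V')) U]
  rw [real_inner_comm (q * (star p * U')) V]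
  rw [inner_mul_left' p (star q * V) U']
  rw [inner_mul_left' q (star p * U) V']
  rw [inner_mul_left' p (star q * V') U]
  rw [inner_mul_left' q (star p * U') V]
  rw [real_inner_comm (star p * U') (star q * V), real_inner_comm (star p * U) (star q * V')]
  have h3 : ((Real.sqrt 3 : ℝ))⁻¹ * (Real.sqrt 3)⁻¹ = 1 / 3 := by
    rw [← mul_inv, Real.mul_self_sqrt (by norm_num)]; norm_num
  linear_combination ((5 * (inner ℝ U U' : ℝ) + 5 * (inner ℝ V V' : ℝ)
    - 4 * (inner ℝ (star p * U) (star q * V') : ℝ)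
    - 4 * (inner ℝ (star p * U') (star q * V) : ℝ)) / 2) * h3
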